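/- The C*-algebra generated by the self-adjoint parts of the monotone annihilators coincides with the whole monotone C*-algebra: the norm closure of the unital *-subalgebra of B(F_m) generated by {s_i = a_i + a_i† : i ∈ ℤ} equals ℜ_m. -/

import Mathlib

open scoped InnerProductSpace ComplexOrder
open ContinuousLinearMap Filter

noncomputable section

/-- The monotone Fock space `F_m = ℓ²(Finset ℤ)`, the Hilbert space of square-summable
complex families indexed by the finite subsets of `ℤ`. -/
abbrev Fm : Type := lp (fun _ : Finset ℤ => ℂ) 2

/-- The canonical orthonormal basis vector `e_A`, for `A` a finite subset of `ℤ`;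
`e ∅` is the vacuum vector `Ω`. -/
noncomputable def e (A : Finset ℤ) : Fm := lp.single 2 A 1

/-- `adag` is the family of monotone creation operators: `adag i` sends `e A` to
`e (A ∪ {i})` if `A = ∅` or `i < min A` (equivalently, `i < j` for all `j ∈ A`),
and to `0` otherwise. -/
def CreatesOn (adag : ℤ → (Fm →L[ℂ] Fm)) : Prop :=
  ∀ (i : ℤ) (A : Finset ℤ),
    adag i (e A) = if ∀ j ∈ A, i < j then e (insert i A) else 0

/-- `a` is the family of monotone annihilation operators: `a i` sends `e A` to
`e (A \ {i})` if `A ≠ ∅` and `i = min A` (equivalently, `i ∈ A` and `i ≤ j` for all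
`j ∈ A`), and to `0` otherwise. -/
def AnnihilatesOn (a : ℤ → (Fm →L[ℂ] Fm)) : Prop :=
  ∀ (i : ℤ) (A : Finset ℤ),
    a i (e A) = if i ∈ A ∧ ∀ j ∈ A, i ≤ j then e (A.erase i) else 0

/-- `ℜ_m`: the monotone C*-algebra, i.e. the norm closure of the unital *-subalgebra
of `B(F_m)` generated by the monotone annihilators `{a_i : i ∈ ℤ}`. -/
def Rm (a : ℤ → (Fm →L[ℂ] Fm)) : Set (Fm →L[ℂ] Fm) :=
  closure (StarAlgebra.adjoin ℂ (Set.range a) : Set (Fm →L[ℂ] Fm))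

lemma clm_ext_e {T S : Fm →L[ℂ] Fm} (h : ∀ A, T (e A) = S (e A)) : T = S := by
  refine ContinuousLinearMap.ext fun f => ?_
  have hf : HasSum (fun A : Finset ℤ => lp.single 2 A (f A)) f :=
    lp.hasSum_single (by norm_num) f
  have key : ∀ A : Finset ℤ, lp.single (E := fun _ : Finset ℤ => ℂ) 2 A (f A) = f A • e A := by
    intro A
    have := lp.single_smul (E := fun _ : Finset ℤ => ℂ) 2 A (f A) (1 : ℂ)
    simp only [smul_eq_mul, mul_one] at this
    rw [e]; exact this
  have h1 : HasSum (fun A : Finset ℤ => T (lp.single 2 A (f A))) (T f) := hf.mapL T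
  have h2 : HasSum (fun A : Finset ℤ => S (lp.single 2 A (f A))) (S f) := hf.mapL S
  refine h1.unique ?_
  refine HasSum.congr_fun h2 fun A => ?_
  rw [key A, map_smul, map_smul, h A]

lemma inner_e (B : Finset ℤ) (x : Fm) : ⟪e B, x⟫_ℂ = x B := by
  simp [e, lp.inner_single_left]

lemma vec_ext {x y : Fm} (h : ∀ B, ⟪e B, x⟫_ℂ = ⟪e B, y⟫_ℂ) : x = y := by
  apply lp.ext
  funext B
  have := h B
  rwa [inner_e, inner_e] at this

lemma inner_e_e (A B : Finset ℤ) : ⟪e B, e A⟫_ℂ = if B = A then 1 else 0 := by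
  rw [inner_e]
  unfold e
  rw [lp.single_apply]
  split_ifs with h1 <;> simp_all

lemma star_a {a adag : ℤ → (Fm →L[ℂ] Fm)} (ha : AnnihilatesOn a)
    (hadag : CreatesOn adag) (i : ℤ) : star (a i) = adag i := by
  rw [star_eq_adjoint]
  refine clm_ext_e fun A => ?_
  refine vec_ext fun B => ?_
  rw [ContinuousLinearMap.adjoint_inner_right, ha, hadag]
  by_cases hP : i ∈ B ∧ ∀ j ∈ B, i ≤ j
  · rw [if_pos hP, inner_e_e]
    by_cases hQ : ∀ j ∈ A, i < j
    · rw [if_pos hQ, inner_e_e]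
      by_cases hAB : B = insert i A
      · have hBA : B.erase i = A := by
          subst hAB
          exact Finset.erase_insert (fun hiA => lt_irrefl i (hQ i hiA))
        rw [if_pos hBA, if_pos hAB]
      · have : ¬ B.erase i = A := by
          intro hBA
          exact hAB (by rw [← hBA, Finset.insert_erase hP.1])
        rw [if_neg this, if_neg hAB]
    · rw [if_neg hQ, inner_zero_right]
      have : ¬ B.erase i = A := by
        intro hBA
        apply hQ
        intro j hj
        rw [← hBA] at hj
        rcases Finset.mem_erase.mp hj with ⟨hji, hjB⟩
        exact lt_of_le_of_ne (hP.2 j hjB) (Ne.symm hji)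
      rw [if_neg this]
  · rw [if_neg hP, inner_zero_left]
    by_cases hQ : ∀ j ∈ A, i < j
    · rw [if_pos hQ, inner_e_e]
      have : ¬ B = insert i A := by
        intro hAB
        subst hAB
        refine hP ⟨Finset.mem_insert_self i A, fun j hj => ?_⟩
        rcases Finset.mem_insert.mp hj with h | h
        · omega
        · exact le_of_lt (hQ j h)
      rw [if_neg this]
    · rw [if_neg hQ, inner_zero_right]

lemma key_identity {a adag : ℤ → (Fm →L[ℂ] Fm)} (ha : AnnihilatesOn a)
    (hadag : CreatesOn adag) (i : ℤ) :
    (a (i+1) + adag (i+1)) * ((a (i+1) + adag (i+1)) * (a i + adag i)) = a i := by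
  refine clm_ext_e fun A => ?_
  simp only [ContinuousLinearMap.mul_apply, ContinuousLinearMap.add_apply]
  by_cases hP : i ∈ A ∧ ∀ j ∈ A, i ≤ j
  · -- a i (e A) = e (A.erase i), adag i (e A) = 0
    have hQ : ¬ ∀ j ∈ A, i < j := fun h => lt_irrefl i (h i hP.1)
    rw [ha i A, if_pos hP, hadag i A, if_neg hQ, add_zero]
    set B := A.erase i with hB
    have hBgt : ∀ j ∈ B, i < j := fun j hj => by
      rcases Finset.mem_erase.mp hj with ⟨hji, hjA⟩
      exact lt_of_le_of_ne (hP.2 j hjA) (Ne.symm hji)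
    by_cases hin : (i+1) ∈ B
    · -- first s: annihilate i+1
      have hP1 : (i+1) ∈ B ∧ ∀ j ∈ B, i+1 ≤ j := ⟨hin, fun j hj => hBgt j hj⟩
      have hQ1 : ¬ ∀ j ∈ B, i+1 < j := fun h => lt_irrefl _ (h _ hin)
      rw [ha (i+1) B, if_pos hP1, hadag (i+1) B, if_neg hQ1, add_zero]
      set C := B.erase (i+1) with hC
      have hCgt : ∀ j ∈ C, i+1 < j := fun j hj => by
        rcases Finset.mem_erase.mp hj with ⟨hji, hjB⟩
        exact lt_of_le_of_ne (hBgt j hjB) (Ne.symm hji)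
      have hP2 : ¬ ((i+1) ∈ C ∧ ∀ j ∈ C, i+1 ≤ j) := by
        rintro ⟨hmem, -⟩
        exact (Finset.notMem_erase _ _) hmem
      rw [ha (i+1) C, if_neg hP2, hadag (i+1) C, if_pos hCgt, zero_add,
        hC, Finset.insert_erase hin]
    · -- first s: create i+1
      have hQ1 : ∀ j ∈ B, i+1 < j := fun j hj =>
        lt_of_le_of_ne (hBgt j hj) (fun h => hin (h ▸ hj))
      have hP1 : ¬ ((i+1) ∈ B ∧ ∀ j ∈ B, i+1 ≤ j) := fun h => hin h.1
      rw [ha (i+1) B, if_neg hP1, hadag (i+1) B, if_pos hQ1, zero_add]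
      set C := insert (i+1) B with hC
      have hP2 : (i+1) ∈ C ∧ ∀ j ∈ C, i+1 ≤ j := by
        refine ⟨Finset.mem_insert_self _ _, fun j hj => ?_⟩
        rcases Finset.mem_insert.mp hj with h | h
        · omega
        · exact le_of_lt (hQ1 j h)
      have hQ2 : ¬ ∀ j ∈ C, i+1 < j := fun h =>
        lt_irrefl _ (h _ (Finset.mem_insert_self _ _))
      rw [ha (i+1) C, if_pos hP2, hadag (i+1) C, if_neg hQ2, add_zero,
        hC, Finset.erase_insert hin]
  · by_cases hQ : ∀ j ∈ A, i < j
    · -- a i (e A) = 0, adag i (e A) = e (insert i A)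
      rw [ha i A, if_neg hP, hadag i A, if_pos hQ, zero_add]
      set B := insert i A with hB
      have hP1 : ¬ ((i+1) ∈ B ∧ ∀ j ∈ B, i+1 ≤ j) := by
        rintro ⟨-, h⟩
        have := h i (Finset.mem_insert_self _ _)
        omega
      have hQ1 : ¬ ∀ j ∈ B, i+1 < j := by
        intro h
        have := h i (Finset.mem_insert_self _ _)
        omega
      rw [ha (i+1) B, if_neg hP1, hadag (i+1) B, if_neg hQ1, add_zero, map_zero, map_zero,
        add_zero]
    · rw [ha i A, if_neg hP, hadag i A, if_neg hQ, add_zero, map_zero, map_zero, add_zero,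
        map_zero, map_zero, add_zero]

/-- Proposition 4.11 (Proposition `invmon2`): the C*-algebra generated by the
self-adjoint parts `s_i = a_i + a_i†` of the monotone annihilators coincides with the
whole monotone C*-algebra `ℜ_m`: the norm closure of the unital *-subalgebra generated
by `{s_i : i ∈ ℤ}` equals `ℜ_m`. -/
theorem monotone_selfadjoint_parts_generate
    (a adag : ℤ → (Fm →L[ℂ] Fm))
    (ha : AnnihilatesOn a) (hadag : CreatesOn adag) :
    closure ((StarAlgebra.adjoin ℂ
        (Set.range fun i : ℤ => a i + adag i) :
        StarSubalgebra ℂ (Fm →L[ℂ] Fm)) : Set (Fm →L[ℂ] Fm)) = Rm a := by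
  have hstar : ∀ i, star (a i) = adag i := star_a ha hadag
  have h1 : (StarAlgebra.adjoin ℂ (Set.range fun i : ℤ => a i + adag i) :
      StarSubalgebra ℂ (Fm →L[ℂ] Fm)) ≤ StarAlgebra.adjoin ℂ (Set.range a) := by
    rw [StarAlgebra.adjoin_le_iff]
    rintro _ ⟨i, rfl⟩
    have hai : a i ∈ StarAlgebra.adjoin ℂ (Set.range a) :=
      StarAlgebra.subset_adjoin ℂ _ ⟨i, rfl⟩
    have : adag i ∈ StarAlgebra.adjoin ℂ (Set.range a) := by
      rw [← hstar i]; exact star_mem hai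
    exact add_mem hai this
  have h2 : StarAlgebra.adjoin ℂ (Set.range a) ≤
      (StarAlgebra.adjoin ℂ (Set.range fun i : ℤ => a i + adag i) :
      StarSubalgebra ℂ (Fm →L[ℂ] Fm)) := by
    rw [StarAlgebra.adjoin_le_iff]
    rintro _ ⟨i, rfl⟩
    have hs : ∀ j : ℤ, a j + adag j ∈
        (StarAlgebra.adjoin ℂ (Set.range fun i : ℤ => a i + adag i) :
        StarSubalgebra ℂ (Fm →L[ℂ] Fm)) := fun j =>
      StarAlgebra.subset_adjoin ℂ _ ⟨j, rfl⟩
    rw [← key_identity ha hadag i]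
    exact mul_mem (hs (i+1)) (mul_mem (hs (i+1)) (hs i))
  exact subset_antisymm (closure_mono h1) (closure_mono h2)


end
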